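/- Let A, B be p×p symmetric positive definite real matrices, and let A^{1/2}, B^{1/2} denote their (unique) symmetric positive definite square roots. Then ‖A^{1/2} − B^{1/2}‖₂ ≤ ‖A − B‖₂ / (√λ_p(A) + √λ_p(B)), where λ_p denotes the smallest eigenvalue and ‖·‖₂ the spectral norm. -/

import Mathlib

open Matrix
open scoped Matrix.Norms.L2Operator

section PosSemidefSqrt

open scoped ComplexOrder

/-- The positive semidefinite square root of a positive semidefinite matrix
(as `Matrix.PosSemidef.sqrt` was defined in Mathlib, now removed). -/
noncomputable def Matrix.PosSemidef.sqrt {n 𝕜 : Type*} [Fintype n] [RCLike 𝕜] [DecidableEq n]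
    {A : Matrix n n 𝕜} (hA : A.PosSemidef) : Matrix n n 𝕜 :=
  hA.1.eigenvectorUnitary.1 * diagonal ((↑) ∘ (√·) ∘ hA.1.eigenvalues) *
    (star hA.1.eigenvectorUnitary : Matrix n n 𝕜)

end PosSemidefSqrt

namespace OpNormSqrtAux

variable {p : ℕ}

lemma psd_sqrt_posSemidef {A : Matrix (Fin p) (Fin p) ℝ} (hA : A.PosSemidef) :
    hA.sqrt.PosSemidef := by
  unfold Matrix.PosSemidef.sqrt
  have := (PosSemidef.diagonal (d := (RCLike.ofReal ∘ (√·) ∘ hA.1.eigenvalues : Fin p → ℝ))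
    (fun i => by simp [Real.sqrt_nonneg])).mul_mul_conjTranspose_same hA.1.eigenvectorUnitary.1
  simpa [star_eq_conjTranspose] using this

lemma psd_sqrt_mul_self {A : Matrix (Fin p) (Fin p) ℝ} (hA : A.PosSemidef) :
    hA.sqrt * hA.sqrt = A := by
  unfold Matrix.PosSemidef.sqrt
  have hU : (star hA.1.eigenvectorUnitary : Matrix (Fin p) (Fin p) ℝ) * hA.1.eigenvectorUnitary.1 = 1 :=
    Unitary.star_mul_self_of_mem hA.1.eigenvectorUnitary.2
  conv_rhs => rw [hA.1.spectral_theorem]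
  rw [Unitary.conjStarAlgAut_apply]
  have hd : diagonal (RCLike.ofReal ∘ (√·) ∘ hA.1.eigenvalues : Fin p → ℝ) *
      diagonal (RCLike.ofReal ∘ (√·) ∘ hA.1.eigenvalues : Fin p → ℝ) =
      diagonal (RCLike.ofReal ∘ hA.1.eigenvalues) := by
    rw [diagonal_mul_diagonal]
    congr 1; funext i
    simp [Real.mul_self_sqrt (hA.eigenvalues_nonneg i)]
  calc _ = hA.1.eigenvectorUnitary.1 * (diagonal (RCLike.ofReal ∘ (√·) ∘ hA.1.eigenvalues : Fin p → ℝ) *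
      ((star hA.1.eigenvectorUnitary : Matrix (Fin p) (Fin p) ℝ) * hA.1.eigenvectorUnitary.1) *
      diagonal (RCLike.ofReal ∘ (√·) ∘ hA.1.eigenvalues : Fin p → ℝ)) *
      (star hA.1.eigenvectorUnitary : Matrix (Fin p) (Fin p) ℝ) := by
        simp only [Matrix.mul_assoc]
    _ = _ := by rw [hU, Matrix.mul_one, hd]

lemma inner_eq_dot (x y : EuclideanSpace ℝ (Fin p)) : (inner ℝ x y : ℝ) = ⇑x ⬝ᵥ ⇑y := by
  simp [PiLp.inner_apply, dotProduct, RCLike.inner_apply, mul_comm]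

lemma dot_mulVec_symm {M : Matrix (Fin p) (Fin p) ℝ} (hM : M.IsHermitian) (x y : Fin p → ℝ) :
    x ⬝ᵥ (M *ᵥ y) = (M *ᵥ x) ⬝ᵥ y := by
  have hMt : Mᵀ = M := by
    rw [← conjTranspose_eq_transpose_of_trivial]; exact hM.eq
  rw [dotProduct_mulVec]
  conv_lhs => rw [← hMt]
  rw [vecMul_transpose]

lemma repr_mulVec {M : Matrix (Fin p) (Fin p) ℝ} (hM : M.IsHermitian)
    (x : EuclideanSpace ℝ (Fin p)) (j : Fin p) :
    hM.eigenvectorBasis.repr ((EuclideanSpace.equiv (Fin p) ℝ).symm (M *ᵥ ⇑x)) j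
      = hM.eigenvalues j * hM.eigenvectorBasis.repr x j := by
  rw [OrthonormalBasis.repr_apply_apply, OrthonormalBasis.repr_apply_apply,
    inner_eq_dot, inner_eq_dot]
  have h1 : ⇑((EuclideanSpace.equiv (Fin p) ℝ).symm (M *ᵥ ⇑x)) = M *ᵥ ⇑x := rfl
  rw [h1, dot_mulVec_symm hM, hM.mulVec_eigenvectorBasis, smul_dotProduct]
  rfl

lemma sum_repr_sq {M : Matrix (Fin p) (Fin p) ℝ} (hM : M.IsHermitian)
    (x : EuclideanSpace ℝ (Fin p)) :
    ∑ j, (hM.eigenvectorBasis.repr x j) ^ 2 = ‖x‖ ^ 2 := by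
  have := hM.eigenvectorBasis.repr.norm_map x
  rw [← this, EuclideanSpace.norm_eq]
  rw [Real.sq_sqrt (by positivity)]
  simp [sq_abs]

lemma dot_eq_sum {M : Matrix (Fin p) (Fin p) ℝ} (hM : M.IsHermitian)
    (x : EuclideanSpace ℝ (Fin p)) :
    ⇑x ⬝ᵥ (M *ᵥ ⇑x) = ∑ j, hM.eigenvalues j * (hM.eigenvectorBasis.repr x j) ^ 2 := by
  have h := hM.eigenvectorBasis.repr.inner_map_map x
      ((EuclideanSpace.equiv (Fin p) ℝ).symm (M *ᵥ ⇑x))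
  have h2 : (inner ℝ x ((EuclideanSpace.equiv (Fin p) ℝ).symm (M *ᵥ ⇑x)) : ℝ) = ⇑x ⬝ᵥ (M *ᵥ ⇑x) := by
    rw [inner_eq_dot]; rfl
  rw [← h2, ← h, inner_eq_dot]
  unfold dotProduct
  refine Finset.sum_congr rfl fun j _ => ?_
  have h3 := repr_mulVec hM x j
  rw [h3]; ring

lemma iInf_le_dot (hp : 0 < p) {M : Matrix (Fin p) (Fin p) ℝ} (hM : M.IsHermitian)
    (x : EuclideanSpace ℝ (Fin p)) (hx : ‖x‖ = 1) :
    (⨅ i, hM.eigenvalues i) ≤ ⇑x ⬝ᵥ (M *ᵥ ⇑x) := by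
  haveI : Nonempty (Fin p) := ⟨⟨0, hp⟩⟩
  have hbdd : BddBelow (Set.range hM.eigenvalues) := (Set.finite_range _).bddBelow
  rw [dot_eq_sum hM x]
  calc (⨅ i, hM.eigenvalues i)
      = (⨅ i, hM.eigenvalues i) * ∑ j, (hM.eigenvectorBasis.repr x j) ^ 2 := by
        rw [sum_repr_sq hM x, hx]; ring
    _ = ∑ j, (⨅ i, hM.eigenvalues i) * (hM.eigenvectorBasis.repr x j) ^ 2 := by
        rw [Finset.mul_sum]
    _ ≤ ∑ j, hM.eigenvalues j * (hM.eigenvectorBasis.repr x j) ^ 2 := by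
        refine Finset.sum_le_sum fun j _ => ?_
        exact mul_le_mul_of_nonneg_right (ciInf_le hbdd j) (sq_nonneg _)

lemma opNorm_le_of_abs_eigenvalues_le {M : Matrix (Fin p) (Fin p) ℝ} (hM : M.IsHermitian)
    {c : ℝ} (hc : 0 ≤ c) (h : ∀ i, |hM.eigenvalues i| ≤ c) : ‖M‖ ≤ c := by
  rw [Matrix.l2_opNorm_def]
  refine ContinuousLinearMap.opNorm_le_bound _ hc fun y => ?_
  have happ : ((Matrix.toEuclideanLin.trans LinearMap.toContinuousLinearMap) M) y
      = (EuclideanSpace.equiv (Fin p) ℝ).symm (M *ᵥ ⇑y) := by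
    rfl
  rw [happ]
  have hy : ‖(EuclideanSpace.equiv (Fin p) ℝ).symm (M *ᵥ ⇑y)‖ ^ 2 ≤ (c * ‖y‖) ^ 2 := by
    rw [← sum_repr_sq hM]
    calc ∑ j, (hM.eigenvectorBasis.repr ((EuclideanSpace.equiv (Fin p) ℝ).symm (M *ᵥ ⇑y)) j) ^ 2
        = ∑ j, (hM.eigenvalues j) ^ 2 * (hM.eigenvectorBasis.repr y j) ^ 2 := by
          refine Finset.sum_congr rfl fun j _ => ?_
          rw [repr_mulVec hM y j]; ring
      _ ≤ ∑ j, c ^ 2 * (hM.eigenvectorBasis.repr y j) ^ 2 := by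
          refine Finset.sum_le_sum fun j _ => ?_
          refine mul_le_mul_of_nonneg_right ?_ (sq_nonneg _)
          rw [← sq_abs]
          exact pow_le_pow_left₀ (abs_nonneg _) (h j) 2
      _ = (c * ‖y‖) ^ 2 := by rw [← Finset.mul_sum, sum_repr_sq hM]; ring
  have h1 : (0:ℝ) ≤ c * ‖y‖ := by positivity
  nlinarith [norm_nonneg ((EuclideanSpace.equiv (Fin p) ℝ).symm (M *ᵥ ⇑y))]

lemma iInf_eigen_pos (hp : 0 < p) {A : Matrix (Fin p) (Fin p) ℝ} (hA : A.PosDef) :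
    0 < ⨅ i, hA.1.eigenvalues i := by
  haveI : Nonempty (Fin p) := ⟨⟨0, hp⟩⟩
  obtain ⟨i, hi⟩ := Finite.exists_min hA.1.eigenvalues
  exact lt_of_lt_of_le (hA.eigenvalues_pos i) (le_ciInf hi)

lemma sqrt_iInf_le_dot (hp : 0 < p) {A : Matrix (Fin p) (Fin p) ℝ} (hA : A.PosDef)
    (x : EuclideanSpace ℝ (Fin p)) (hx : ‖x‖ = 1) :
    Real.sqrt (⨅ i, hA.1.eigenvalues i) ≤ ⇑x ⬝ᵥ (hA.posSemidef.sqrt *ᵥ ⇑x) := by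
  haveI : Nonempty (Fin p) := ⟨⟨0, hp⟩⟩
  set S := hA.posSemidef.sqrt with hSdef
  have hS : S.PosSemidef := hA.posSemidef |> psd_sqrt_posSemidef
  obtain ⟨i, hi⟩ := Finite.exists_min hS.1.eigenvalues
  have hbdd : BddBelow (Set.range hS.1.eigenvalues) := (Set.finite_range _).bddBelow
  have hmin : (⨅ k, hS.1.eigenvalues k) = hS.1.eigenvalues i :=
    le_antisymm (ciInf_le hbdd i) (le_ciInf hi)
  set v := hS.1.eigenvectorBasis i with hvdef
  have hv : ‖v‖ = 1 := hS.1.eigenvectorBasis.orthonormal.1 i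
  have hvv : ⇑v ⬝ᵥ ⇑v = 1 := by
    have := real_inner_self_eq_norm_sq v
    rw [inner_eq_dot, hv] at this
    simpa using this
  have hAv : ⇑v ⬝ᵥ (A *ᵥ ⇑v) = (hS.1.eigenvalues i) ^ 2 := by
    have h1 : S * S = A := psd_sqrt_mul_self hA.posSemidef
    have h2 : S *ᵥ ⇑v = hS.1.eigenvalues i • ⇑v := hS.1.mulVec_eigenvectorBasis i
    rw [← h1, ← mulVec_mulVec, h2, mulVec_smul, h2, smul_smul, dotProduct_smul, hvv]
    simp [sq]
  have hray : (⨅ k, hA.1.eigenvalues k) ≤ (hS.1.eigenvalues i) ^ 2 := by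
    rw [← hAv]; exact iInf_le_dot hp hA.1 v hv
  have hnn : 0 ≤ hS.1.eigenvalues i := hS.eigenvalues_nonneg i
  have h3 : Real.sqrt (⨅ k, hA.1.eigenvalues k) ≤ hS.1.eigenvalues i := by
    calc Real.sqrt (⨅ k, hA.1.eigenvalues k) ≤ Real.sqrt ((hS.1.eigenvalues i) ^ 2) :=
          Real.sqrt_le_sqrt hray
      _ = hS.1.eigenvalues i := by rw [Real.sqrt_sq hnn]
  calc Real.sqrt (⨅ k, hA.1.eigenvalues k) ≤ hS.1.eigenvalues i := h3
    _ = ⨅ k, hS.1.eigenvalues k := hmin.symm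
    _ ≤ ⇑x ⬝ᵥ (S *ᵥ ⇑x) := iInf_le_dot hp hS.1 x hx

end OpNormSqrtAux

open OpNormSqrtAux

/-- for symmetric positive definite `A, B` with symmetric positive
definite square roots `A^{1/2}, B^{1/2}`, one has
`‖A^{1/2} − B^{1/2}‖₂ ≤ ‖A − B‖₂ / (√λ_min(A) + √λ_min(B))`, where `‖·‖₂` is the
spectral (ℓ²-operator) norm and `λ_min` the smallest eigenvalue. -/
theorem opNorm_sqrt_sub_sqrt_le
    (p : ℕ) (hp : 0 < p)
    (A B : Matrix (Fin p) (Fin p) ℝ)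
    (hA : A.PosDef) (hB : B.PosDef) :
    ‖hA.posSemidef.sqrt - hB.posSemidef.sqrt‖ ≤
      ‖A - B‖ /
        (Real.sqrt (⨅ i, hA.1.eigenvalues i) + Real.sqrt (⨅ i, hB.1.eigenvalues i)) := by
  haveI : Nonempty (Fin p) := ⟨⟨0, hp⟩⟩
  set S := hA.posSemidef.sqrt with hSdef
  set T := hB.posSemidef.sqrt with hTdef
  have hS : S.PosSemidef := hA.posSemidef |> psd_sqrt_posSemidef
  have hT : T.PosSemidef := hB.posSemidef |> psd_sqrt_posSemidef
  have hM : (S - T).IsHermitian := hS.1.sub hT.1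
  set sa := Real.sqrt (⨅ i, hA.1.eigenvalues i) with hsa
  set sb := Real.sqrt (⨅ i, hB.1.eigenvalues i) with hsb
  have hsa0 : 0 < sa := Real.sqrt_pos.2 (iInf_eigen_pos hp hA)
  have hsb0 : 0 < sb := Real.sqrt_pos.2 (iInf_eigen_pos hp hB)
  have hd : 0 < sa + sb := by linarith
  rw [le_div_iff₀ hd]
  obtain ⟨j, hj⟩ := Finite.exists_max (fun i => |hM.eigenvalues i|)
  set η := hM.eigenvalues j with hη
  set x := hM.eigenvectorBasis j with hx'
  have hx : ‖x‖ = 1 := hM.eigenvectorBasis.orthonormal.1 j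
  have hSx : sa ≤ ⇑x ⬝ᵥ (S *ᵥ ⇑x) := sqrt_iInf_le_dot hp hA x hx
  have hTx : sb ≤ ⇑x ⬝ᵥ (T *ᵥ ⇑x) := sqrt_iInf_le_dot hp hB x hx
  have hnorm : ‖S - T‖ ≤ |η| := opNorm_le_of_abs_eigenvalues_le hM (abs_nonneg _) hj
  have heig : (S - T) *ᵥ ⇑x = η • ⇑x := hM.mulVec_eigenvectorBasis j
  have hAB : A - B = S * (S - T) + (S - T) * T := by
    have h1 : S * S = A := psd_sqrt_mul_self hA.posSemidef
    have h2 : T * T = B := psd_sqrt_mul_self hB.posSemidef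
    rw [← h1, ← h2]; noncomm_ring
  have key : ⇑x ⬝ᵥ ((A - B) *ᵥ ⇑x) = η * (⇑x ⬝ᵥ (S *ᵥ ⇑x)) + η * (⇑x ⬝ᵥ (T *ᵥ ⇑x)) := by
    rw [hAB, add_mulVec, dotProduct_add, ← mulVec_mulVec, ← mulVec_mulVec, heig,
      mulVec_smul, dotProduct_smul, dot_mulVec_symm hM, heig, smul_dotProduct]
    simp [smul_eq_mul]
  have habs : |⇑x ⬝ᵥ ((A - B) *ᵥ ⇑x)| ≤ ‖A - B‖ := by
    have h1 := Matrix.l2_opNorm_mulVec (A - B) x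
    have h2 : |(inner ℝ x ((EuclideanSpace.equiv (Fin p) ℝ).symm ((A - B) *ᵥ ⇑x)) : ℝ)|
        ≤ ‖x‖ * ‖(EuclideanSpace.equiv (Fin p) ℝ).symm ((A - B) *ᵥ ⇑x)‖ :=
      abs_real_inner_le_norm _ _
    rw [inner_eq_dot] at h2
    have h3 : ⇑((EuclideanSpace.equiv (Fin p) ℝ).symm ((A - B) *ᵥ ⇑x)) = (A - B) *ᵥ ⇑x := rfl
    rw [h3] at h2
    rw [hx] at h1 h2
    calc |⇑x ⬝ᵥ ((A - B) *ᵥ ⇑x)| ≤ 1 * ‖(EuclideanSpace.equiv (Fin p) ℝ).symm ((A - B) *ᵥ ⇑x)‖ := h2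
      _ ≤ 1 * (‖A - B‖ * 1) := by rw [one_mul, one_mul]; exact h1
      _ = ‖A - B‖ := by ring
  calc ‖S - T‖ * (sa + sb) ≤ |η| * (sa + sb) :=
        mul_le_mul_of_nonneg_right hnorm hd.le
    _ ≤ |η| * (⇑x ⬝ᵥ (S *ᵥ ⇑x) + ⇑x ⬝ᵥ (T *ᵥ ⇑x)) :=
        mul_le_mul_of_nonneg_left (by linarith) (abs_nonneg _)
    _ = |η * (⇑x ⬝ᵥ (S *ᵥ ⇑x)) + η * (⇑x ⬝ᵥ (T *ᵥ ⇑x))| := by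
        rw [← mul_add, abs_mul, abs_of_nonneg (by linarith : (0:ℝ) ≤ ⇑x ⬝ᵥ (S *ᵥ ⇑x) + ⇑x ⬝ᵥ (T *ᵥ ⇑x))]
    _ = |⇑x ⬝ᵥ ((A - B) *ᵥ ⇑x)| := by rw [key]
    _ ≤ ‖A - B‖ := habs
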